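/- Let I : A ⥤ D be a fully faithful codense functor. Then I preserves all colimits that exist in A: for every diagram K : J ⥤ A (of any shape) admitting a colimit, I sends colimit cocones on K to colimit cocones on K ⋙ I. -/

import Mathlib

open CategoryTheory CategoryTheory.Limits

universe w₁ w₂ v₁ u₁ v₂ u₂

/-- The conerve functor of `I : A ⥤ D`, sending `d` to `D(d, I -)`.  `I` is *codense* when
this functor (equivalently, the conerve `D ⥤ [A, Type]ᵒᵖ`) is fully faithful. -/
def conerve {A : Type u₁} [Category.{v₁} A] {D : Type u₂} [Category.{v₂} D]
    (I : A ⥤ D) : Dᵒᵖ ⥤ A ⥤ Type v₂ :=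
  coyoneda ⋙ (Functor.whiskeringLeft A D (Type v₂)).obj I

section Aux

variable {A : Type u₁} [Category.{v₁} A] {D : Type u₂} [Category.{v₂} D]
  (I : A ⥤ D) [I.Full] [I.Faithful]
  {J : Type w₁} [Category.{w₂} J] {K : J ⥤ A}

/-- Auxiliary cocone on `K` obtained from a cocone `s` on `K ⋙ I` and `g : s.pt ⟶ I a`. -/
noncomputable def conerveAuxCocone (s : Cocone (K ⋙ I)) {a : A} (g : s.pt ⟶ I.obj a) : Cocone K where
  pt := a
  ι :=
    { app := fun j => I.preimage (s.ι.app j ≫ g)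
      naturality := fun j j' φ => by
        apply I.map_injective
        simp only [Functor.map_comp, Functor.map_preimage, Functor.const_obj_map,
          Category.comp_id]
        rw [← Category.assoc, ← Functor.comp_map, s.w φ]
        simp }

/-- The induced natural transformation `D(s.pt, I-) ⟶ D(I c.pt, I-)`. -/
noncomputable def conerveAuxNat {c : Cocone K} (hc : IsColimit c) (s : Cocone (K ⋙ I)) :
    (conerve I).obj (Opposite.op s.pt) ⟶ (conerve I).obj (Opposite.op (I.obj c.pt)) where
  app a := TypeCat.ofHom fun g => I.map (hc.desc (conerveAuxCocone I s g))
  naturality a a' h := by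
    ext g
    dsimp [conerve]
    show I.map (hc.desc (conerveAuxCocone I s (g ≫ I.map h))) = I.map (hc.desc (conerveAuxCocone I s g)) ≫ I.map h
    erw [← I.map_comp]
    congr 1
    refine (hc.uniq (conerveAuxCocone I s (g ≫ I.map h)) _ fun j => ?_).symm
    apply I.map_injective
    simp [conerveAuxCocone]
    exact Category.assoc _ _ _

end Aux

/-- Statement 19: a fully faithful codense functor `I : A ⥤ D` preserves all colimits that
exist in `A`: for every diagram `K : J ⥤ A` admitting a colimit, `I` sends colimit cocones
on `K` to colimit cocones on `K ⋙ I`. -/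
theorem codense_fullyFaithful_preserves_colimits
    {A : Type u₁} [Category.{v₁} A] {D : Type u₂} [Category.{v₂} D]
    (I : A ⥤ D) [I.Full] [I.Faithful]
    (hFull : (conerve I).Full) (hFaithful : (conerve I).Faithful)
    {J : Type w₁} [Category.{w₂} J] (K : J ⥤ A) (hK : HasColimit K)
    (c : Cocone K) (hc : IsColimit c) :
    Nonempty (IsColimit (I.mapCocone c)) := by
  classical
  have key : ∀ (s : Cocone (K ⋙ I)) (a : A) (g : s.pt ⟶ I.obj a),
      ((hFull.map_surjective (conerveAuxNat I hc s)).choose).unop ≫ g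
        = I.map (hc.desc (conerveAuxCocone I s g)) := by
    intro s a g
    have spec := (hFull.map_surjective (conerveAuxNat I hc s)).choose_spec
    have h := types_congr_hom (congrArg (fun α => α.app a) spec) g
    exact h
  refine ⟨{
    desc := fun s => ((hFull.map_surjective (conerveAuxNat I hc s)).choose).unop
    fac := fun s j => ?_
    uniq := fun s m hm => ?_ }⟩
  · refine Quiver.Hom.op_inj (hFaithful.map_injective ?_)
    ext a g
    dsimp [conerve]
    erw [Category.assoc, key s a g, ← I.map_comp, hc.fac (conerveAuxCocone I s g) j]
    simp [conerveAuxCocone]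
  · refine Quiver.Hom.op_inj (hFaithful.map_injective ?_)
    have spec := (hFull.map_surjective (conerveAuxNat I hc s)).choose_spec
    rw [Quiver.Hom.op_unop, spec]
    ext a g
    dsimp [conerve, conerveAuxNat]
    have : m ≫ g = I.map (I.preimage (m ≫ g)) := by simp
    rw [this]
    congr 1
    refine hc.uniq (conerveAuxCocone I s g) _ fun j => ?_
    apply I.map_injective
    simp only [Functor.map_comp, Functor.map_preimage, conerveAuxCocone]
    simp only [Functor.mapCocone_ι_app] at hm
    erw [← Category.assoc, hm j]
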